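/- The function f(x,y) = √2·|x| − |y| on ℝ² is a viscosity solution of the Lorentzian eikonal equation g(∇u,∇u) = −1 on the 2-dimensional Minkowski space-time: for every point p ∈ ℝ² and every upper test function φ for f at p one has (∂φ/∂x(p))² − (∂φ/∂y(p))² ≥ 1, and for every point p ∈ ℝ² and every lower test function φ for f at p one has (∂φ/∂x(p))² − (∂φ/∂y(p))² ≤ 1. -/

import Mathlib

open Filter Topology



/-- `u` is a viscosity solution of the Lorentzian eikonal equation
`g(∇u,∇u) = -1` on the open set `O` in 2-dimensional Minkowski space-time
(metric `-dx² + dy²`): for every upper test function `φ` at `p ∈ O`,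
`(∂φ/∂x(p))² - (∂φ/∂y(p))² ≥ 1`, and for every lower test function `φ` at `p`,
`(∂φ/∂x(p))² - (∂φ/∂y(p))² ≤ 1`. -/
def IsViscositySolution (u : ℝ × ℝ → ℝ) (O : Set (ℝ × ℝ)) : Prop :=
  (∀ p ∈ O, ∀ φ : ℝ × ℝ → ℝ, ∀ U : Set (ℝ × ℝ),
      IsOpen U → p ∈ U → U ⊆ O → ContDiffOn ℝ 1 φ U → φ p = u p →
      (∀ x ∈ U, u x ≤ φ x) →
      1 ≤ (fderiv ℝ φ p (1, 0)) ^ 2 - (fderiv ℝ φ p (0, 1)) ^ 2) ∧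
  (∀ p ∈ O, ∀ φ : ℝ × ℝ → ℝ, ∀ U : Set (ℝ × ℝ),
      IsOpen U → p ∈ U → U ⊆ O → ContDiffOn ℝ 1 φ U → φ p = u p →
      (∀ x ∈ U, φ x ≤ u x) →
      (fderiv ℝ φ p (1, 0)) ^ 2 - (fderiv ℝ φ p (0, 1)) ^ 2 ≤ 1)




lemma line_hasDerivAt (p v : ℝ × ℝ) : HasDerivAt (fun t : ℝ => p + t • v) v 0 := by
  simpa using ((hasDerivAt_id (0:ℝ)).smul_const v).const_add p

lemma comp_hasDerivAt' {φ : ℝ × ℝ → ℝ} {p v : ℝ × ℝ} {L : ℝ × ℝ →L[ℝ] ℝ}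
    (h : HasFDerivAt φ L p) : HasDerivAt (fun t : ℝ => φ (p + t • v)) (L v) 0 := by
  have h' : HasFDerivAt φ L ((fun t : ℝ => p + t • v) 0) := by simpa using h
  exact h'.comp_hasDerivAt (x := (0:ℝ)) (line_hasDerivAt p v)

lemma slope_eq (φ : ℝ × ℝ → ℝ) (p v : ℝ × ℝ) (t : ℝ) :
    slope (fun t : ℝ => φ (p + t • v)) 0 t = (φ (p + t • v) - φ p) / t := by
  simp [slope_def_field]

lemma dirDeriv_ge_of_right {φ : ℝ × ℝ → ℝ} {p v : ℝ × ℝ} {L : ℝ × ℝ →L[ℝ] ℝ}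
    (h : HasFDerivAt φ L p) {c : ℝ}
    (hc : ∀ᶠ t : ℝ in 𝓝[>] 0, c * t ≤ φ (p + t • v) - φ p) : c ≤ L v := by
  have ht : Tendsto (slope (fun t : ℝ => φ (p + t • v)) 0) (𝓝[>] 0) (𝓝 (L v)) :=
    (hasDerivAt_iff_tendsto_slope.mp (comp_hasDerivAt' h)).mono_left
      (nhdsWithin_mono 0 (fun x hx => ne_of_gt hx))
  refine ge_of_tendsto ht ?_
  filter_upwards [hc, self_mem_nhdsWithin] with t h1 (h2 : 0 < t)
  rw [slope_eq, le_div_iff₀ h2]; linarith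

lemma dirDeriv_le_of_left {φ : ℝ × ℝ → ℝ} {p v : ℝ × ℝ} {L : ℝ × ℝ →L[ℝ] ℝ}
    (h : HasFDerivAt φ L p) {c : ℝ}
    (hc : ∀ᶠ t : ℝ in 𝓝[<] 0, c * t ≤ φ (p + t • v) - φ p) : L v ≤ c := by
  have ht : Tendsto (slope (fun t : ℝ => φ (p + t • v)) 0) (𝓝[<] 0) (𝓝 (L v)) :=
    (hasDerivAt_iff_tendsto_slope.mp (comp_hasDerivAt' h)).mono_left
      (nhdsWithin_mono 0 (fun x hx => ne_of_lt hx))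
  refine le_of_tendsto ht ?_
  filter_upwards [hc, self_mem_nhdsWithin] with t h1 (h2 : t < 0)
  rw [slope_eq, div_le_iff_of_neg h2]; linarith

lemma dirDeriv_le_of_right {φ : ℝ × ℝ → ℝ} {p v : ℝ × ℝ} {L : ℝ × ℝ →L[ℝ] ℝ}
    (h : HasFDerivAt φ L p) {c : ℝ}
    (hc : ∀ᶠ t : ℝ in 𝓝[>] 0, φ (p + t • v) - φ p ≤ c * t) : L v ≤ c := by
  have ht : Tendsto (slope (fun t : ℝ => φ (p + t • v)) 0) (𝓝[>] 0) (𝓝 (L v)) :=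
    (hasDerivAt_iff_tendsto_slope.mp (comp_hasDerivAt' h)).mono_left
      (nhdsWithin_mono 0 (fun x hx => ne_of_gt hx))
  refine le_of_tendsto ht ?_
  filter_upwards [hc, self_mem_nhdsWithin] with t h1 (h2 : 0 < t)
  rw [slope_eq, div_le_iff₀ h2]; linarith

lemma dirDeriv_ge_of_left {φ : ℝ × ℝ → ℝ} {p v : ℝ × ℝ} {L : ℝ × ℝ →L[ℝ] ℝ}
    (h : HasFDerivAt φ L p) {c : ℝ}
    (hc : ∀ᶠ t : ℝ in 𝓝[<] 0, φ (p + t • v) - φ p ≤ c * t) : c ≤ L v := by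
  have ht : Tendsto (slope (fun t : ℝ => φ (p + t • v)) 0) (𝓝[<] 0) (𝓝 (L v)) :=
    (hasDerivAt_iff_tendsto_slope.mp (comp_hasDerivAt' h)).mono_left
      (nhdsWithin_mono 0 (fun x hx => ne_of_lt hx))
  refine ge_of_tendsto ht ?_
  filter_upwards [hc, self_mem_nhdsWithin] with t h1 (h2 : t < 0)
  rw [slope_eq, le_div_iff_of_neg h2]; linarith

lemma mem_eventually {U : Set (ℝ × ℝ)} {p : ℝ × ℝ} (hU : IsOpen U) (hp : p ∈ U)
    (v : ℝ × ℝ) : ∀ᶠ t : ℝ in 𝓝 (0:ℝ), p + t • v ∈ U := by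
  have hcont : Continuous (fun t : ℝ => p + t • v) :=
    continuous_const.add (continuous_id.smul continuous_const)
  have : Tendsto (fun t : ℝ => p + t • v) (𝓝 0) (𝓝 p) := by
    simpa using hcont.tendsto 0
  exact this.eventually (hU.mem_nhds hp)

lemma smul_e1 (p : ℝ × ℝ) (t : ℝ) : p + t • ((1:ℝ), (0:ℝ)) = (p.1 + t, p.2) := by
  simp [Prod.ext_iff]

lemma smul_e2 (p : ℝ × ℝ) (t : ℝ) : p + t • ((0:ℝ), (1:ℝ)) = (p.1, p.2 + t) := by
  simp [Prod.ext_iff]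


/-- The function `f(x,y) = √2·|x| - |y|` is a viscosity solution of the Lorentzian
eikonal equation on the whole 2-dimensional Minkowski space-time. -/
theorem sqrt_two_abs_x_sub_abs_y_isViscositySolution :
    IsViscositySolution (fun p => Real.sqrt 2 * |p.1| - |p.2|) Set.univ := by
  have hsq : Real.sqrt 2 ^ 2 = 2 := Real.sq_sqrt (by norm_num)
  have hs0 : (0:ℝ) ≤ Real.sqrt 2 := Real.sqrt_nonneg 2
  constructor
  · rintro p - φ U hUo hpU - hφ hφp hle
    have hd : HasFDerivAt φ (fderiv ℝ φ p) p :=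
      ((hφ.contDiffAt (hUo.mem_nhds hpU)).differentiableAt one_ne_zero).hasFDerivAt
    simp only at hφp
    set a := fderiv ℝ φ p (1, 0) with ha_def
    set b := fderiv ℝ φ p (0, 1) with hb_def
    have hb1 : (-1:ℝ) ≤ b := by
      refine dirDeriv_ge_of_right hd ?_
      filter_upwards [(mem_eventually hUo hpU ((0:ℝ),(1:ℝ))).filter_mono nhdsWithin_le_nhds,
        self_mem_nhdsWithin] with t hm (ht : 0 < t)
      have h1 := hle _ hm
      simp only at h1
      rw [smul_e2] at h1 ⊢
      have habs : |p.2 + t| ≤ |p.2| + t := by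
        calc |p.2 + t| ≤ |p.2| + |t| := abs_add_le _ _
          _ = |p.2| + t := by rw [abs_of_pos ht]
      linarith
    have hb2 : b ≤ 1 := by
      refine dirDeriv_le_of_left hd ?_
      filter_upwards [(mem_eventually hUo hpU ((0:ℝ),(1:ℝ))).filter_mono nhdsWithin_le_nhds,
        self_mem_nhdsWithin] with t hm (ht : t < 0)
      have h1 := hle _ hm
      simp only at h1
      rw [smul_e2] at h1 ⊢
      have habs : |p.2 + t| ≤ |p.2| - t := by
        calc |p.2 + t| ≤ |p.2| + |t| := abs_add_le _ _
          _ = |p.2| - t := by rw [abs_of_neg ht]; ring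
      linarith
    have ha2 : 2 ≤ a ^ 2 := by
      rcases le_or_gt 0 p.1 with hx | hx
      · have ha : Real.sqrt 2 ≤ a := by
          refine dirDeriv_ge_of_right hd ?_
          filter_upwards [(mem_eventually hUo hpU ((1:ℝ),(0:ℝ))).filter_mono nhdsWithin_le_nhds,
            self_mem_nhdsWithin] with t hm (ht : 0 < t)
          have h1 := hle _ hm
          simp only at h1
          rw [smul_e1] at h1 ⊢
          have e1 : |p.1 + t| = p.1 + t := abs_of_nonneg (by linarith)
          have e2 : |p.1| = p.1 := abs_of_nonneg hx
          rw [e1] at h1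
          rw [e2] at hφp
          nlinarith
        nlinarith
      · have ha : a ≤ -Real.sqrt 2 := by
          refine dirDeriv_le_of_left hd ?_
          filter_upwards [(mem_eventually hUo hpU ((1:ℝ),(0:ℝ))).filter_mono nhdsWithin_le_nhds,
            self_mem_nhdsWithin] with t hm (ht : t < 0)
          have h1 := hle _ hm
          simp only at h1
          rw [smul_e1] at h1 ⊢
          have e1 : |p.1 + t| = -(p.1 + t) := abs_of_neg (by linarith)
          have e2 : |p.1| = -p.1 := abs_of_neg hx
          rw [e1] at h1
          rw [e2] at hφp
          nlinarith
        nlinarith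
    have hb : b ^ 2 ≤ 1 := by nlinarith
    linarith
  · rintro p - φ U hUo hpU - hφ hφp hge
    have hd : HasFDerivAt φ (fderiv ℝ φ p) p :=
      ((hφ.contDiffAt (hUo.mem_nhds hpU)).differentiableAt one_ne_zero).hasFDerivAt
    simp only at hφp
    set a := fderiv ℝ φ p (1, 0) with ha_def
    set b := fderiv ℝ φ p (0, 1) with hb_def
    have ha1 : a ≤ Real.sqrt 2 := by
      refine dirDeriv_le_of_right hd ?_
      filter_upwards [(mem_eventually hUo hpU ((1:ℝ),(0:ℝ))).filter_mono nhdsWithin_le_nhds,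
        self_mem_nhdsWithin] with t hm (ht : 0 < t)
      have h1 := hge _ hm
      simp only at h1
      rw [smul_e1] at h1 ⊢
      have habs : |p.1 + t| ≤ |p.1| + t := by
        calc |p.1 + t| ≤ |p.1| + |t| := abs_add_le _ _
          _ = |p.1| + t := by rw [abs_of_pos ht]
      nlinarith
    have ha2 : -Real.sqrt 2 ≤ a := by
      refine dirDeriv_ge_of_left hd ?_
      filter_upwards [(mem_eventually hUo hpU ((1:ℝ),(0:ℝ))).filter_mono nhdsWithin_le_nhds,
        self_mem_nhdsWithin] with t hm (ht : t < 0)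
      have h1 := hge _ hm
      simp only at h1
      rw [smul_e1] at h1 ⊢
      have habs : |p.1 + t| ≤ |p.1| - t := by
        calc |p.1 + t| ≤ |p.1| + |t| := abs_add_le _ _
          _ = |p.1| - t := by rw [abs_of_neg ht]; ring
      nlinarith
    have hb2 : 1 ≤ b ^ 2 := by
      rcases le_or_gt 0 p.2 with hy | hy
      · have hb : b ≤ -1 := by
          refine dirDeriv_le_of_right hd ?_
          filter_upwards [(mem_eventually hUo hpU ((0:ℝ),(1:ℝ))).filter_mono nhdsWithin_le_nhds,
            self_mem_nhdsWithin] with t hm (ht : 0 < t)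
          have h1 := hge _ hm
          simp only at h1
          rw [smul_e2] at h1 ⊢
          have e1 : |p.2 + t| = p.2 + t := abs_of_nonneg (by linarith)
          have e2 : |p.2| = p.2 := abs_of_nonneg hy
          rw [e1] at h1
          rw [e2] at hφp
          linarith
        nlinarith
      · have hb : 1 ≤ b := by
          refine dirDeriv_ge_of_left hd ?_
          filter_upwards [(mem_eventually hUo hpU ((0:ℝ),(1:ℝ))).filter_mono nhdsWithin_le_nhds,
            self_mem_nhdsWithin] with t hm (ht : t < 0)
          have h1 := hge _ hm
          simp only at h1
          rw [smul_e2] at h1 ⊢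
          have e1 : |p.2 + t| = -(p.2 + t) := abs_of_neg (by linarith)
          have e2 : |p.2| = -p.2 := abs_of_neg hy
          rw [e1] at h1
          rw [e2] at hφp
          linarith
        nlinarith
    have ha : a ^ 2 ≤ 2 := by nlinarith
    linarith
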